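/- For every n ≥ 0 (with the convention P_{−1}^(1) := 0 and the term ζ·r_0·P_{−1}^(1) interpreted as 0), the following two identities hold identically in x: (i) d/dx P_{n+1}^(0)(x;ζ) = ((n+1)/p̃_n)·P_n^(1)(x;ζ) + ζ·r_n·P_{n−1}^(1)(x;ζ); and (ii) (x²−1)·d/dx P_n^(1)(x;ζ) + x·P_n^(1)(x;ζ) = (n+1)·p̃_n·P_{n+1}^(0)(x;ζ) + ζ·p_n·P_n^(0)(x;ζ). -/

import Mathlib

open MeasureTheory Polynomial

noncomputable def besselK (n : ℕ) (ζ : ℝ) : ℝ :=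
  ∫ t in Set.Ioi (0 : ℝ), Real.cosh ((n : ℝ) * t) * Real.exp (-ζ * Real.cosh t)

noncomputable def Gfun (ζ : ℝ) : ℝ := besselK 2 ζ / besselK 1 ζ

noncomputable def wgt (ℓ : ℕ) (ζ x : ℝ) : ℝ :=
  (x ^ 2 - 1) ^ ((ℓ : ℝ) - 1 / 2) * Real.exp (-ζ * x) / besselK 1 ζ

open Set Real Filter

set_option linter.unusedSectionVars false


lemma poly_exp_integrableOn {ζ : ℝ} (hζ : 0 < ζ) (g : Polynomial ℝ) :
    IntegrableOn (fun x => g.eval x * Real.exp (-ζ * x)) (Set.Ioi 0) := by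
  have mono : ∀ k : ℕ, IntegrableOn (fun x : ℝ => x ^ k * Real.exp (-ζ * x)) (Set.Ioi 0) := by
    intro k
    have h := integrableOn_rpow_mul_exp_neg_mul_rpow (p := 1) (s := (k : ℝ)) (b := ζ)
      (by exact_mod_cast neg_one_lt_zero.trans_le (Nat.cast_nonneg k)) one_pos hζ
    refine h.congr_fun (fun x hx => ?_) measurableSet_Ioi
    beta_reduce
    rw [Real.rpow_natCast, Real.rpow_one]
  have : ∀ x ∈ Set.Ioi (0:ℝ), (∑ k ∈ Finset.range (g.natDegree + 1),
      g.coeff k * (x ^ k * Real.exp (-ζ * x))) = g.eval x * Real.exp (-ζ * x) := by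
    intro x _
    rw [Polynomial.eval_eq_sum_range, Finset.sum_mul]
    exact Finset.sum_congr rfl (fun k _ => by ring
    )
  have hsum : IntegrableOn (fun x : ℝ => ∑ k ∈ Finset.range (g.natDegree + 1),
      g.coeff k * (x ^ k * Real.exp (-ζ * x))) (Set.Ioi 0) :=
    integrable_finset_sum _ (fun k _ => (mono k).const_mul _)
  exact hsum.congr_fun this measurableSet_Ioi

lemma poly_exp_tendsto {ζ : ℝ} (hζ : 0 < ζ) (g : Polynomial ℝ) :
    Tendsto (fun x => g.eval x * Real.exp (-ζ * x)) atTop (nhds 0) := by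
  have mono : ∀ k : ℕ, Tendsto (fun x : ℝ => x ^ k * Real.exp (-ζ * x)) atTop (nhds 0) := by
    intro k
    have h1 : Tendsto (fun x : ℝ => ζ * x) atTop atTop :=
      Tendsto.const_mul_atTop hζ tendsto_id
    have h2 := (tendsto_pow_mul_exp_neg_atTop_nhds_zero k).comp h1
    have h3 := h2.const_mul ((ζ⁻¹) ^ k)
    rw [mul_zero] at h3
    refine h3.congr (fun x => ?_)
    simp only [Function.comp]
    rw [mul_pow, neg_mul]
    field_simp
    ring_nf
    rw [← mul_pow, mul_inv_cancel₀ hζ.ne', one_pow, one_mul]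
  have : Tendsto (fun x : ℝ => ∑ k ∈ Finset.range (g.natDegree + 1),
      g.coeff k * (x ^ k * Real.exp (-ζ * x))) atTop (nhds 0) := by
    have := tendsto_finset_sum (Finset.range (g.natDegree + 1))
      (fun k _ => (mono k).const_mul (g.coeff k))
    simpa using this
  refine this.congr' ?_
  filter_upwards [eventually_gt_atTop 0] with x _
  rw [Polynomial.eval_eq_sum_range, Finset.sum_mul]
  exact Finset.sum_congr rfl (fun k _ => by ring)

lemma weight_integrableOn {ζ : ℝ} (hζ : 0 < ζ) (f : Polynomial ℝ) {s : ℝ}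
    (hs1 : -1 < s) (hs2 : s ≤ 1) :
    IntegrableOn (fun x => f.eval x * ((x ^ 2 - 1) ^ s * Real.exp (-ζ * x))) (Set.Ioi 1) := by
  have hcontOn : ∀ t : Set ℝ, (∀ x ∈ t, 1 < x) → ContinuousOn
      (fun x : ℝ => f.eval x * ((x ^ 2 - 1) ^ s * Real.exp (-ζ * x))) t := by
    intro t ht
    refine (f.toContinuousMap.continuous.continuousOn).mul (ContinuousOn.mul ?_ ?_)
    · refine ContinuousOn.rpow_const ?_ (fun x hx => Or.inl (by nlinarith [ht x hx]))
      exact ((continuous_id.pow 2).sub continuous_const).continuousOn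
    · exact (Real.continuous_exp.comp ((continuous_const.mul continuous_id))).continuousOn
  rw [← Ioc_union_Ioi_eq_Ioi (by norm_num : (1:ℝ) ≤ 2), integrableOn_union]
  constructor
  · -- near 1
    obtain ⟨M, hM⟩ := (isCompact_Icc (a := (1:ℝ)) (b := 2)).exists_bound_of_continuousOn
      (f.toContinuousMap.continuous.continuousOn)
    have hM0 : 0 ≤ M := le_trans (norm_nonneg _) (hM 1 (by norm_num))
    have hg : IntegrableOn (fun x : ℝ => (x - 1) ^ s * (3 * M)) (Set.Ioc 1 2) := by
      have h := (intervalIntegral.intervalIntegrable_rpow' (a := 0) (b := 1) hs1).comp_sub_right 1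
      rw [intervalIntegrable_iff_integrableOn_Ioc_of_le (by norm_num)] at h
      norm_num at h
      exact h.mul_const _
    refine Integrable.mono' hg ((hcontOn _ (fun x hx => hx.1)).aestronglyMeasurable measurableSet_Ioc) ?_
    rw [ae_restrict_iff' measurableSet_Ioc]
    filter_upwards with x hx
    obtain ⟨hx1, hx2⟩ := hx
    have hx1' : (0:ℝ) ≤ x - 1 := by linarith
    have hsq : (0:ℝ) ≤ x ^ 2 - 1 := by nlinarith
    have hfac : (x ^ 2 - 1 : ℝ) = (x - 1) * (x + 1) := by ring
    have hmul : (x ^ 2 - 1) ^ s = (x - 1) ^ s * (x + 1) ^ s := by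
      rw [hfac, Real.mul_rpow hx1' (by linarith)]
    have hB : (x + 1) ^ s ≤ 3 := by
      calc (x + 1) ^ s ≤ (x + 1) ^ (1:ℝ) :=
            Real.rpow_le_rpow_of_exponent_le (by linarith) hs2
        _ = x + 1 := Real.rpow_one _
        _ ≤ 3 := by linarith
    have hE : Real.exp (-ζ * x) ≤ 1 := Real.exp_le_one_iff.2 (by nlinarith)
    have hF : |f.eval x| ≤ M := hM x ⟨le_of_lt hx1, hx2⟩
    have hA : (0:ℝ) ≤ (x - 1) ^ s := Real.rpow_nonneg hx1' s
    have hBpos : (0:ℝ) ≤ (x + 1) ^ s := Real.rpow_nonneg (by linarith) s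
    have hEpos : (0:ℝ) ≤ Real.exp (-ζ * x) := (Real.exp_pos _).le
    rw [norm_mul, norm_mul, Real.norm_eq_abs, Real.norm_eq_abs, Real.norm_eq_abs,
      abs_of_nonneg (Real.rpow_nonneg hsq s), abs_of_nonneg hEpos, hmul]
    calc |f.eval x| * ((x - 1) ^ s * (x + 1) ^ s * Real.exp (-ζ * x))
        ≤ M * ((x - 1) ^ s * (3 * 1)) := by
          refine mul_le_mul hF ?_ (by positivity) hM0
          rw [mul_assoc]
          refine mul_le_mul_of_nonneg_left ?_ hA
          exact mul_le_mul hB hE hEpos (by norm_num)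
      _ = (x - 1) ^ s * (3 * M) := by ring
  · -- at infinity
    have hg : IntegrableOn (fun x : ℝ => |(f * X ^ 2 : Polynomial ℝ).eval x * Real.exp (-ζ * x)|)
        (Set.Ioi 2) :=
      (((poly_exp_integrableOn hζ (f * X ^ 2)).mono_set
        (Set.Ioi_subset_Ioi (by norm_num))).abs)
    refine Integrable.mono' hg ((hcontOn _ (fun x hx => by exact lt_trans (by norm_num) hx)).aestronglyMeasurable measurableSet_Ioi) ?_
    rw [ae_restrict_iff' measurableSet_Ioi]
    filter_upwards with x hx
    have hx2 : (2:ℝ) < x := hx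
    have hsq : (1:ℝ) ≤ x ^ 2 - 1 := by nlinarith
    have hrp : (x ^ 2 - 1) ^ s ≤ x ^ 2 := by
      calc (x ^ 2 - 1) ^ s ≤ (x ^ 2 - 1) ^ (1:ℝ) :=
            Real.rpow_le_rpow_of_exponent_le hsq hs2
        _ = x ^ 2 - 1 := Real.rpow_one _
        _ ≤ x ^ 2 := by linarith
    have hEpos : (0:ℝ) ≤ Real.exp (-ζ * x) := (Real.exp_pos _).le
    rw [Polynomial.eval_mul, Polynomial.eval_pow, Polynomial.eval_X, abs_mul, abs_mul,
      abs_of_nonneg hEpos, abs_of_nonneg (by positivity : (0:ℝ) ≤ x ^ 2)]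
    rw [norm_mul, norm_mul, Real.norm_eq_abs, Real.norm_eq_abs, Real.norm_eq_abs,
      abs_of_nonneg (Real.rpow_nonneg (by nlinarith) s), abs_of_nonneg hEpos]
    calc |f.eval x| * ((x ^ 2 - 1) ^ s * Real.exp (-ζ * x))
        ≤ |f.eval x| * (x ^ 2 * Real.exp (-ζ * x)) := by
          refine mul_le_mul_of_nonneg_left ?_ (abs_nonneg _)
          exact mul_le_mul_of_nonneg_right hrp hEpos
      _ = |f.eval x| * x ^ 2 * Real.exp (-ζ * x) := by ring

lemma star0 {ζ : ℝ} (hζ : 0 < ζ) (f : Polynomial ℝ) :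
    ∫ x in Set.Ioi (1:ℝ),
      (((X : Polynomial ℝ) ^ 2 - 1) * derivative f + X * f - C ζ * ((X ^ 2 - 1) * f)).eval x *
        ((x ^ 2 - 1) ^ (-(1/2) : ℝ) * Real.exp (-ζ * x)) = 0 := by
  set g : Polynomial ℝ :=
    ((X : Polynomial ℝ) ^ 2 - 1) * derivative f + X * f - C ζ * ((X ^ 2 - 1) * f) with hg
  set F : ℝ → ℝ := fun x => f.eval x * (Real.sqrt (x ^ 2 - 1) * Real.exp (-ζ * x)) with hF
  set G : ℝ → ℝ := fun x =>
    g.eval x * ((x ^ 2 - 1) ^ (-(1/2) : ℝ) * Real.exp (-ζ * x)) with hG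
  have hderiv : ∀ x ∈ Set.Ioi (1:ℝ), HasDerivAt F (G x) x := by
    intro x hx
    have hx1 : (1:ℝ) < x := hx
    have h1 : (0:ℝ) < x ^ 2 - 1 := by nlinarith
    have hq : (0:ℝ) < Real.sqrt (x ^ 2 - 1) := Real.sqrt_pos.2 h1
    have hs : HasDerivAt (fun y : ℝ => Real.sqrt (y ^ 2 - 1))
        ((2 * x ^ 1) / (2 * Real.sqrt (x ^ 2 - 1))) x :=
      HasDerivAt.sqrt ((hasDerivAt_pow 2 x).sub_const 1) (ne_of_gt h1)
    have he : HasDerivAt (fun y : ℝ => Real.exp (-ζ * y)) (Real.exp (-ζ * x) * (-ζ)) x := by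
      have : HasDerivAt (fun y : ℝ => -ζ * y) (-ζ) x := by
        simpa using (hasDerivAt_id x).const_mul (-ζ)
      exact this.exp
    have hf : HasDerivAt (fun y => f.eval y) ((derivative f).eval x) x := f.hasDerivAt x
    have hcomb := hf.mul (hs.mul he)
    convert hcomb using 1
    · rfl
    · rfl
    · rfl
    rw [hG]
    simp only [hg, Polynomial.eval_mul, Polynomial.eval_add, Polynomial.eval_sub,
      Polynomial.eval_pow, Polynomial.eval_X, Polynomial.eval_one, Polynomial.eval_C]
    have hrw : (x ^ 2 - 1) ^ (-(1/2) : ℝ) = (Real.sqrt (x ^ 2 - 1))⁻¹ := by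
      rw [Real.rpow_neg h1.le, Real.sqrt_eq_rpow]
    rw [hrw]
    have hq2 : Real.sqrt (x ^ 2 - 1) ^ 2 = x ^ 2 - 1 := Real.sq_sqrt h1.le
    simp only [Pi.mul_apply]
    have hsi : Real.sqrt (x ^ 2 - 1) * (Real.sqrt (x ^ 2 - 1))⁻¹ = 1 := mul_inv_cancel₀ hq.ne'
    linear_combination (-(Real.sqrt (x ^ 2 - 1))⁻¹ * Real.exp (-ζ * x) *
      (Polynomial.eval x (derivative f) - ζ * Polynomial.eval x f)) * hq2
      + (Real.sqrt (x ^ 2 - 1) * Real.exp (-ζ * x) *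
      (Polynomial.eval x (derivative f) - ζ * Polynomial.eval x f)) * hsi
  have hcont : ContinuousWithinAt F (Set.Ici 1) 1 := by
    have : Continuous F := by
      refine (f.toContinuousMap.continuous).mul (Continuous.mul ?_ ?_)
      · exact Real.continuous_sqrt.comp ((continuous_id.pow 2).sub continuous_const)
      · exact Real.continuous_exp.comp (continuous_const.mul continuous_id)
    exact this.continuousWithinAt
  have hint : IntegrableOn G (Set.Ioi 1) :=
    weight_integrableOn hζ g (by norm_num) (by norm_num)
  have htend : Tendsto F atTop (nhds 0) := by
    have hb := (poly_exp_tendsto hζ (f * X)).abs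
    rw [abs_zero] at hb
    refine squeeze_zero_norm' ?_ hb
    filter_upwards [eventually_ge_atTop (1:ℝ)] with x hx1
    have h0 : (0:ℝ) ≤ x ^ 2 - 1 := by nlinarith
    have hsq : Real.sqrt (x ^ 2 - 1) ≤ x := by
      calc Real.sqrt (x ^ 2 - 1) ≤ Real.sqrt (x ^ 2) := Real.sqrt_le_sqrt (by linarith)
        _ = x := by rw [Real.sqrt_sq (by linarith)]
    rw [Polynomial.eval_mul, Polynomial.eval_X, Real.norm_eq_abs, hF]
    simp only
    rw [abs_mul, abs_mul, abs_of_nonneg (Real.sqrt_nonneg _),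
      abs_of_nonneg (Real.exp_pos _).le, abs_mul]
    calc |Polynomial.eval x f| * (Real.sqrt (x ^ 2 - 1) * Real.exp (-ζ * x))
        ≤ |Polynomial.eval x f| * (x * Real.exp (-ζ * x)) := by
          refine mul_le_mul_of_nonneg_left ?_ (abs_nonneg _)
          exact mul_le_mul_of_nonneg_right hsq (Real.exp_pos _).le
      _ ≤ |Polynomial.eval x f * x| * |Real.exp (-ζ * x)| := by
          rw [abs_mul, abs_of_nonneg (Real.exp_pos _).le,
            abs_of_nonneg (by linarith : (0:ℝ) ≤ x)]
          exact le_of_eq (by ring)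
  have key := integral_Ioi_of_hasDerivAt_of_tendsto hcont hderiv hint htend
  have hF1 : F 1 = 0 := by
    rw [hF]
    norm_num
  rw [hF1, sub_zero] at key
  exact key

section Alg
variable (P : ℕ → Polynomial ℝ) (lc : ℕ → ℝ) (Φ : Polynomial ℝ → ℝ)
variable (hdeg : ∀ n, (P n).natDegree = n) (hlc : ∀ n, (P n).coeff n = lc n)
  (hlcne : ∀ n, lc n ≠ 0)
  (hadd : ∀ f g, Φ (f + g) = Φ f + Φ g)
  (hsmul : ∀ (a : ℝ) f, Φ (Polynomial.C a * f) = a * Φ f)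
  (horth : ∀ m n, Φ (P m * P n) = if m = n then 1 else 0)

include hadd hsmul in
lemma phi_zero : Φ 0 = 0 := by
  have := hsmul 0 0
  simpa using this

include hadd hsmul in
lemma phi_sum {ι : Type*} (s : Finset ι) (f : ι → Polynomial ℝ) :
    Φ (∑ i ∈ s, f i) = ∑ i ∈ s, Φ (f i) := by
  classical
  induction s using Finset.induction_on with
  | empty => simpa using phi_zero Φ hadd hsmul
  | insert a s hx ih =>
                    rw [Finset.sum_insert hx, Finset.sum_insert hx, hadd, ih]

include hdeg hlc hlcne in
lemma exists_repr : ∀ N (q : Polynomial ℝ), q.natDegree ≤ N →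
    ∃ c : ℕ → ℝ, q = ∑ k ∈ Finset.range (N + 1), Polynomial.C (c k) * P k := by
  intro N
  induction N with
  | zero =>
    intro q hq
    refine ⟨fun _ => q.coeff 0 / lc 0, ?_⟩
    have hP0 : P 0 = Polynomial.C (lc 0) := by
      have h1 := Polynomial.eq_C_of_natDegree_le_zero (le_of_eq (hdeg 0))
      rw [← hlc 0]
      exact h1
    have hq0 : q = Polynomial.C (q.coeff 0) := Polynomial.eq_C_of_natDegree_le_zero hq
    rw [Finset.sum_range_one, hP0, ← Polynomial.C_mul, div_mul_cancel₀ _ (hlcne 0)]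
    exact hq0
  | succ N ih =>
    intro q hq
    set a := q.coeff (N + 1) / lc (N + 1) with ha
    set q' := q - Polynomial.C a * P (N + 1) with hq'
    have hdq' : q'.natDegree ≤ N := by
      rw [Polynomial.natDegree_le_iff_coeff_eq_zero]
      intro m hm
      rw [hq', Polynomial.coeff_sub, Polynomial.coeff_C_mul]
      rcases eq_or_lt_of_le (Nat.succ_le_of_lt hm) with h | h
      · rw [← h, hlc, ha, div_mul_cancel₀ _ (hlcne (N + 1)), sub_self]
      · rw [Polynomial.coeff_eq_zero_of_natDegree_lt (lt_of_le_of_lt hq h),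
          Polynomial.coeff_eq_zero_of_natDegree_lt (by rw [hdeg]; exact h), mul_zero, sub_zero]
    obtain ⟨c, hc⟩ := ih q' hdq'
    refine ⟨fun k => if k = N + 1 then a else c k, ?_⟩
    rw [Finset.sum_range_succ]
    simp only [reduceIte]
    have : ∑ k ∈ Finset.range (N + 1), Polynomial.C (if k = N + 1 then a else c k) * P k
        = ∑ k ∈ Finset.range (N + 1), Polynomial.C (c k) * P k := by
      refine Finset.sum_congr rfl (fun k hk => ?_)
      have : k ≠ N + 1 := by
        have := Finset.mem_range.1 hk
        omega
      rw [if_neg this]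
    rw [this, ← hc, hq']
    ring

include hadd hsmul horth in
lemma phi_mul_sum (j N : ℕ) (c : ℕ → ℝ) :
    Φ (P j * ∑ k ∈ Finset.range (N + 1), Polynomial.C (c k) * P k)
      = if j ∈ Finset.range (N + 1) then c j else 0 := by
  rw [Finset.mul_sum]
  have h1 : ∀ k, P j * (Polynomial.C (c k) * P k) = Polynomial.C (c k) * (P j * P k) := by
    intro k; ring
  calc Φ (∑ k ∈ Finset.range (N + 1), P j * (Polynomial.C (c k) * P k))
      = ∑ k ∈ Finset.range (N + 1), Φ (P j * (Polynomial.C (c k) * P k)) :=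
        phi_sum Φ hadd hsmul _ _
    _ = ∑ k ∈ Finset.range (N + 1), c k * (if j = k then 1 else 0) := by
        refine Finset.sum_congr rfl (fun k _ => ?_)
        rw [h1, hsmul, horth]
    _ = if j ∈ Finset.range (N + 1) then c j else 0 := by
        rw [← Finset.sum_ite_eq (Finset.range (N + 1)) j c]
        refine Finset.sum_congr rfl (fun k _ => ?_)
        by_cases h : j = k <;> simp [h]

include hdeg hlc in
lemma coeff_repr (N : ℕ) (c : ℕ → ℝ) :
    (∑ k ∈ Finset.range (N + 1), Polynomial.C (c k) * P k).coeff N = c N * lc N := by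
  rw [Polynomial.finset_sum_coeff, Finset.sum_range_succ]
  have h0 : ∀ k ∈ Finset.range N, (Polynomial.C (c k) * P k).coeff N = 0 := by
    intro k hk
    rw [Polynomial.coeff_C_mul,
      Polynomial.coeff_eq_zero_of_natDegree_lt (by rw [hdeg]; exact Finset.mem_range.1 hk),
      mul_zero]
  rw [Finset.sum_eq_zero h0, zero_add, Polynomial.coeff_C_mul, hlc]

include hdeg hlc hlcne hadd hsmul horth in
lemma lemA (m : ℕ) (q : Polynomial ℝ) (hq : q.natDegree ≤ m) :
    Φ (P m * q) = q.coeff m / lc m := by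
  obtain ⟨c, hc⟩ := exists_repr P lc hdeg hlc hlcne m q hq
  rw [hc, phi_mul_sum P Φ hadd hsmul horth,
    if_pos (Finset.mem_range.2 (Nat.lt_succ_self m))]
  rw [coeff_repr P lc hdeg hlc, mul_div_cancel_right₀ _ (hlcne m)]

include hdeg hlc hlcne hadd hsmul horth in
lemma lemB (N : ℕ) (q : Polynomial ℝ) (hq : q.natDegree ≤ N) :
    q = ∑ k ∈ Finset.range (N + 1), Polynomial.C (Φ (P k * q)) * P k := by
  obtain ⟨c, hc⟩ := exists_repr P lc hdeg hlc hlcne N q hq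
  have : ∀ k ∈ Finset.range (N + 1), Polynomial.C (Φ (P k * q)) * P k
      = Polynomial.C (c k) * P k := by
    intro k hk
    rw [hc, phi_mul_sum P Φ hadd hsmul horth, if_pos hk]
  rw [Finset.sum_congr rfl this, ← hc]

end Alg

lemma coeffXsq (h : Polynomial ℝ) (m : ℕ) :
    (((X : Polynomial ℝ) ^ 2 - 1) * h).coeff (m + 2) = h.coeff m - h.coeff (m + 2) := by
  rw [sub_mul, one_mul, Polynomial.coeff_sub, Polynomial.coeff_X_pow_mul]

lemma natDegree_Xsq : (((X : Polynomial ℝ) ^ 2 - 1)).natDegree = 2 := by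
  rw [← Polynomial.C_1]
  exact Polynomial.natDegree_X_pow_sub_C

theorem stmt10
    (ζ : ℝ) (hζ : 0 < ζ)
    (P0 P1 : ℕ → Polynomial ℝ) (lc0 lc1 : ℕ → ℝ)
    (hdeg0 : ∀ n, (P0 n).natDegree = n)
    (hdeg1 : ∀ n, (P1 n).natDegree = n)
    (hlc0 : ∀ n, (P0 n).leadingCoeff = lc0 n)
    (hlc1 : ∀ n, (P1 n).leadingCoeff = lc1 n)
    (hlc0pos : ∀ n, 0 < lc0 n)
    (hlc1pos : ∀ n, 0 < lc1 n)
    (horth0 : ∀ m n, (∫ x in Set.Ioi (1 : ℝ),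
        (P0 m).eval x * (P0 n).eval x * wgt 0 ζ x) = if m = n then (1 : ℝ) else 0)
    (horth1 : ∀ m n, (∫ x in Set.Ioi (1 : ℝ),
        (P1 m).eval x * (P1 n).eval x * wgt 1 ζ x) = if m = n then (1 : ℝ) else 0)
    (p r pt : ℕ → ℝ)
    (hp : ∀ n, p n = lc0 n / lc1 n)
    (hr : ∀ n, r (n + 1) = lc1 n / lc0 (n + 2))
    (hpt : ∀ n, pt n = lc1 n / lc0 (n + 1)) :
    (derivative (P0 1) = C (1 / pt 0) * P1 0) ∧
    (∀ n, derivative (P0 (n + 2)) =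
      C (((n : ℝ) + 2) / pt (n + 1)) * P1 (n + 1) + C (ζ * r (n + 1)) * P1 n) ∧
    (∀ n, (X ^ 2 - 1) * derivative (P1 n) + X * P1 n =
      C (((n : ℝ) + 1) * pt n) * P0 (n + 1) + C (ζ * p n) * P0 n) := by
  classical
  set K := besselK 1 ζ with hK
  -- weight identities
  have hw0 : ∀ x : ℝ, wgt 0 ζ x = (x ^ 2 - 1) ^ (-(1/2) : ℝ) * Real.exp (-ζ * x) / K := by
    intro x; unfold wgt; norm_num [hK]
  have hw1 : ∀ x : ℝ, wgt 1 ζ x = (x ^ 2 - 1) ^ ((1/2) : ℝ) * Real.exp (-ζ * x) / K := by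
    intro x; unfold wgt; norm_num [hK]
  -- the two functionals
  set J0 : Polynomial ℝ → ℝ := fun g => ∫ x in Set.Ioi (1:ℝ), g.eval x * wgt 0 ζ x with hJ0
  set J1 : Polynomial ℝ → ℝ := fun g => ∫ x in Set.Ioi (1:ℝ), g.eval x * wgt 1 ζ x with hJ1
  -- integrability
  have hint0 : ∀ g : Polynomial ℝ,
      IntegrableOn (fun x => g.eval x * wgt 0 ζ x) (Set.Ioi 1) := by
    intro g
    have h := (weight_integrableOn hζ g (by norm_num : (-1:ℝ) < -(1/2))
      (by norm_num)).div_const K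
    refine IntegrableOn.congr_fun h (fun x _ => ?_) measurableSet_Ioi
    rw [hw0, mul_div_assoc]
  have hint1 : ∀ g : Polynomial ℝ,
      IntegrableOn (fun x => g.eval x * wgt 1 ζ x) (Set.Ioi 1) := by
    intro g
    have h := (weight_integrableOn hζ g (by norm_num : (-1:ℝ) < (1/2))
      (by norm_num)).div_const K
    refine IntegrableOn.congr_fun h (fun x _ => ?_) measurableSet_Ioi
    rw [hw1, mul_div_assoc]
  -- linearity
  have hadd0 : ∀ f g, J0 (f + g) = J0 f + J0 g := by
    intro f g
    rw [hJ0]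
    simp only
    rw [← integral_add (hint0 f) (hint0 g)]
    refine setIntegral_congr_fun measurableSet_Ioi (fun x _ => ?_)
    rw [Polynomial.eval_add]; ring
  have hadd1 : ∀ f g, J1 (f + g) = J1 f + J1 g := by
    intro f g
    rw [hJ1]
    simp only
    rw [← integral_add (hint1 f) (hint1 g)]
    refine setIntegral_congr_fun measurableSet_Ioi (fun x _ => ?_)
    rw [Polynomial.eval_add]; ring
  have hsmul0 : ∀ (a : ℝ) f, J0 (Polynomial.C a * f) = a * J0 f := by
    intro a f
    rw [hJ0]
    simp only
    rw [← integral_const_mul]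
    refine setIntegral_congr_fun measurableSet_Ioi (fun x _ => ?_)
    rw [Polynomial.eval_mul, Polynomial.eval_C]; ring
  have hsmul1 : ∀ (a : ℝ) f, J1 (Polynomial.C a * f) = a * J1 f := by
    intro a f
    rw [hJ1]
    simp only
    rw [← integral_const_mul]
    refine setIntegral_congr_fun measurableSet_Ioi (fun x _ => ?_)
    rw [Polynomial.eval_mul, Polynomial.eval_C]; ring
  -- orthogonality
  have horthJ0 : ∀ m n, J0 (P0 m * P0 n) = if m = n then 1 else 0 := by
    intro m n
    rw [hJ0]
    simp only
    rw [← horth0 m n]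
    refine setIntegral_congr_fun measurableSet_Ioi (fun x _ => ?_)
    rw [Polynomial.eval_mul]
  have horthJ1 : ∀ m n, J1 (P1 m * P1 n) = if m = n then 1 else 0 := by
    intro m n
    rw [hJ1]
    simp only
    rw [← horth1 m n]
    refine setIntegral_congr_fun measurableSet_Ioi (fun x _ => ?_)
    rw [Polynomial.eval_mul]
  -- bridge
  have hbridge : ∀ g : Polynomial ℝ, J1 g = J0 ((X ^ 2 - 1) * g) := by
    intro g
    rw [hJ0, hJ1]
    simp only
    refine setIntegral_congr_fun measurableSet_Ioi (fun x hx => ?_)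
    have hx1 : (1:ℝ) < x := hx
    have h1 : (0:ℝ) < x ^ 2 - 1 := by nlinarith
    rw [Polynomial.eval_mul, Polynomial.eval_sub, Polynomial.eval_pow, Polynomial.eval_X,
      Polynomial.eval_one, hw0, hw1]
    have : (x ^ 2 - 1) ^ ((1/2) : ℝ) = (x ^ 2 - 1) * (x ^ 2 - 1) ^ (-(1/2) : ℝ) := by
      rw [← Real.rpow_one_add' h1.le (by norm_num)]
      norm_num
    rw [this]; ring
  -- integration by parts identity
  have hstar : ∀ f : Polynomial ℝ,
      J0 ((X ^ 2 - 1) * derivative f + X * f) = ζ * J0 ((X ^ 2 - 1) * f) := by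
    intro f
    have h0 := star0 hζ f
    have hJg : J0 ((X ^ 2 - 1) * derivative f + X * f - C ζ * ((X ^ 2 - 1) * f)) = 0 := by
      rw [hJ0]
      simp only
      have : (∫ x in Set.Ioi (1:ℝ),
          ((X ^ 2 - 1) * derivative f + X * f - C ζ * ((X ^ 2 - 1) * f)).eval x * wgt 0 ζ x)
          = (∫ x in Set.Ioi (1:ℝ),
          (((X : Polynomial ℝ) ^ 2 - 1) * derivative f + X * f - C ζ * ((X ^ 2 - 1) * f)).eval x *
            ((x ^ 2 - 1) ^ (-(1/2) : ℝ) * Real.exp (-ζ * x))) / K := by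
        rw [← integral_div]
        refine setIntegral_congr_fun measurableSet_Ioi (fun x _ => ?_)
        rw [hw0]; ring
      rw [this, h0, zero_div]
    have hsub : (X ^ 2 - 1) * derivative f + X * f - C ζ * ((X ^ 2 - 1) * f)
        = ((X ^ 2 - 1) * derivative f + X * f) + C (-ζ) * ((X ^ 2 - 1) * f) := by
      rw [map_neg]; ring
    rw [hsub, hadd0, hsmul0] at hJg
    linarith
  -- coefficient facts
  have hc0 : ∀ n, (P0 n).coeff n = lc0 n := by
    intro n
    rw [← hlc0 n, Polynomial.leadingCoeff, hdeg0]
  have hc1 : ∀ n, (P1 n).coeff n = lc1 n := by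
    intro n
    rw [← hlc1 n, Polynomial.leadingCoeff, hdeg1]
  have hne0 : ∀ n, lc0 n ≠ 0 := fun n => (hlc0pos n).ne'
  have hne1 : ∀ n, lc1 n ≠ 0 := fun n => (hlc1pos n).ne'
  have A0 := lemA P0 lc0 J0 hdeg0 hc0 hne0 hadd0 hsmul0 horthJ0
  have A1 := lemA P1 lc1 J1 hdeg1 hc1 hne1 hadd1 hsmul1 horthJ1
  have B0 := lemB P0 lc0 J0 hdeg0 hc0 hne0 hadd0 hsmul0 horthJ0
  have B1 := lemB P1 lc1 J1 hdeg1 hc1 hne1 hadd1 hsmul1 horthJ1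
  refine ⟨?_, ?_, ?_⟩
  · -- goal 1
    have hD : (derivative (P0 1)).natDegree ≤ 0 := by
      have := Polynomial.natDegree_derivative_le (P0 1)
      rw [hdeg0] at this
      simpa using this
    have h := B1 0 (derivative (P0 1)) hD
    rw [Finset.sum_range_one] at h
    have hcoe : J1 (P1 0 * derivative (P0 1)) = lc0 1 / lc1 0 := by
      rw [A1 0 _ hD, Polynomial.coeff_derivative, hc0 1]
      norm_num
    rw [h, hcoe, hpt, one_div_div]
  · -- goal 2
    intro n
    have hD : (derivative (P0 (n + 2))).natDegree ≤ n + 1 := by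
      have := Polynomial.natDegree_derivative_le (P0 (n + 2))
      rw [hdeg0] at this
      simpa using this
    have hrepr := B1 (n + 1) (derivative (P0 (n + 2))) hD
    have htop : J1 (P1 (n + 1) * derivative (P0 (n + 2)))
        = ((n : ℝ) + 2) * lc0 (n + 2) / lc1 (n + 1) := by
      rw [A1 (n + 1) _ hD, Polynomial.coeff_derivative, hc0 (n + 2)]
      push_cast
      ring_nf
    have hlow : ∀ k, k ≤ n → J1 (P1 k * derivative (P0 (n + 2)))
        = if k = n then ζ * lc1 n / lc0 (n + 2) else 0 := by
      intro k hk
      have hb := hbridge (P1 k * derivative (P0 (n + 2)))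
      have hs := hstar (P0 (n + 2) * P1 k)
      have hre : (X ^ 2 - 1) * derivative (P0 (n + 2) * P1 k) + X * (P0 (n + 2) * P1 k)
          = (X ^ 2 - 1) * (P1 k * derivative (P0 (n + 2)))
            + P0 (n + 2) * ((X ^ 2 - 1) * derivative (P1 k) + X * P1 k) := by
        rw [Polynomial.derivative_mul]; ring
      have hre2 : (X ^ 2 - 1) * (P0 (n + 2) * P1 k)
          = P0 (n + 2) * ((X ^ 2 - 1) * P1 k) := by ring
      rw [hre, hadd0, hre2] at hs
      -- evaluate the three A0 terms
      have e1 : J0 (P0 (n + 2) * ((X ^ 2 - 1) * derivative (P1 k) + X * P1 k)) = 0 := by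
        rw [A0 (n + 2) _ ?_]
        · have c1 : ((X ^ 2 - 1 : Polynomial ℝ) * derivative (P1 k) + X * P1 k).coeff (n + 2)
              = 0 := by
            rw [Polynomial.coeff_add, coeffXsq, Polynomial.coeff_derivative,
              Polynomial.coeff_derivative]
            have z1 : (P1 k).coeff (n + 1) = 0 :=
              Polynomial.coeff_eq_zero_of_natDegree_lt (by rw [hdeg1]; omega)
            have z2 : (P1 k).coeff (n + 3) = 0 :=
              Polynomial.coeff_eq_zero_of_natDegree_lt (by rw [hdeg1]; omega)
            have z3 : (X * P1 k).coeff (n + 2) = (P1 k).coeff (n + 1) := by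
              have := Polynomial.coeff_X_mul (P1 k) (n + 1)
              simpa using this
            rw [z3, z1, z2]
            ring
          rw [c1, zero_div]
        · refine le_trans (Polynomial.natDegree_add_le _ _) ?_
          refine max_le (le_trans (Polynomial.natDegree_mul_le) ?_)
            (le_trans (Polynomial.natDegree_mul_le) ?_)
          · rw [natDegree_Xsq]
            have := Polynomial.natDegree_derivative_le (P1 k)
            rw [hdeg1] at this
            omega
          · rw [Polynomial.natDegree_X, hdeg1]
            omega
      have e2 : J0 (P0 (n + 2) * ((X ^ 2 - 1) * P1 k))
          = (if k = n then lc1 n else 0) / lc0 (n + 2) := by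
        rw [A0 (n + 2) _ ?_]
        · have c2 : ((X ^ 2 - 1 : Polynomial ℝ) * P1 k).coeff (n + 2)
              = if k = n then lc1 n else 0 := by
            rw [coeffXsq]
            have z2 : (P1 k).coeff (n + 2) = 0 :=
              Polynomial.coeff_eq_zero_of_natDegree_lt (by rw [hdeg1]; omega)
            rw [z2, sub_zero]
            by_cases hkn : k = n
            · rw [hkn, hc1]
              simp [hkn]
            · rw [Polynomial.coeff_eq_zero_of_natDegree_lt (by rw [hdeg1]; omega)]
              simp [hkn]
          rw [c2]
        · refine le_trans (Polynomial.natDegree_mul_le) ?_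
          rw [natDegree_Xsq, hdeg1]
          omega
      rw [e1, e2, add_zero] at hs
      rw [hb, hs]
      by_cases hkn : k = n
      · rw [if_pos hkn, if_pos hkn]
        rw [mul_div_assoc]
      · rw [if_neg hkn, if_neg hkn, zero_div, mul_zero]
    -- assemble
    rw [hrepr, Finset.sum_range_succ, Finset.sum_range_succ]
    have hzero : ∑ k ∈ Finset.range n,
        Polynomial.C (J1 (P1 k * derivative (P0 (n + 2)))) * P1 k = 0 := by
      refine Finset.sum_eq_zero (fun k hk => ?_)
      have hk' := Finset.mem_range.1 hk
      rw [hlow k (le_of_lt hk'), if_neg (Nat.ne_of_lt hk')]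
      simp
    rw [hzero, zero_add, htop, hlow n le_rfl, if_pos rfl]
    have hcpt : ((n : ℝ) + 2) / pt (n + 1) = ((n : ℝ) + 2) * lc0 (n + 2) / lc1 (n + 1) := by
      rw [hpt, div_div_eq_mul_div]
    have hcr : ζ * r (n + 1) = ζ * lc1 n / lc0 (n + 2) := by
      rw [hr, mul_div_assoc]
    rw [hcpt, hcr]
    ring
  · -- goal 3
    intro n
    set L : Polynomial ℝ := (X ^ 2 - 1) * derivative (P1 n) + X * P1 n with hL
    have hdL : L.natDegree ≤ n + 1 := by
      rcases n with _ | m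
      · obtain ⟨a, ha⟩ := Polynomial.natDegree_eq_zero.mp (hdeg1 0)
        rw [hL, ← ha, Polynomial.derivative_C, mul_zero, zero_add]
        refine le_trans (Polynomial.natDegree_mul_le) ?_
        rw [Polynomial.natDegree_X, Polynomial.natDegree_C]
      · rw [hL]
        refine le_trans (Polynomial.natDegree_add_le _ _) (max_le ?_ ?_)
        · refine le_trans (Polynomial.natDegree_mul_le) ?_
          rw [natDegree_Xsq]
          have := Polynomial.natDegree_derivative_le (P1 (m + 1))
          rw [hdeg1] at this
          omega
        · refine le_trans (Polynomial.natDegree_mul_le) ?_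
          rw [Polynomial.natDegree_X, hdeg1]
          omega
    have hcL : L.coeff (n + 1) = ((n : ℝ) + 1) * lc1 n := by
      rcases n with _ | m
      · obtain ⟨a, ha⟩ := Polynomial.natDegree_eq_zero.mp (hdeg1 0)
        have ha' : P1 0 = C a := ha.symm
        have hca : a = lc1 0 := by
          have := hc1 0
          rw [ha', Polynomial.coeff_C_zero] at this
          exact this
        rw [hL, ha', Polynomial.derivative_C, mul_zero, zero_add]
        have hxc : ((X : Polynomial ℝ) * C a).coeff (0 + 1) = (C a).coeff 0 :=
          Polynomial.coeff_X_mul (C a) 0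
        rw [hxc, Polynomial.coeff_C_zero, hca]
        norm_num
      · rw [hL, Polynomial.coeff_add]
        have h1 : ((X ^ 2 - 1 : Polynomial ℝ) * derivative (P1 (m + 1))).coeff (m + 2)
            = lc1 (m + 1) * ((m : ℝ) + 1) := by
          rw [coeffXsq, Polynomial.coeff_derivative, Polynomial.coeff_derivative, hc1 (m + 1)]
          have z : (P1 (m + 1)).coeff (m + 3) = 0 :=
            Polynomial.coeff_eq_zero_of_natDegree_lt (by rw [hdeg1]; omega)
          rw [z]
          push_cast
          ring
        have h2 : ((X : Polynomial ℝ) * P1 (m + 1)).coeff (m + 2) = lc1 (m + 1) := by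
          have := Polynomial.coeff_X_mul (P1 (m + 1)) (m + 1)
          simpa [hc1 (m + 1)] using this
        rw [h1, h2]
        push_cast
        ring
    have hrepr := B0 (n + 1) L hdL
    have htop : J0 (P0 (n + 1) * L) = ((n : ℝ) + 1) * lc1 n / lc0 (n + 1) := by
      rw [A0 (n + 1) _ hdL, hcL]
    have hlow : ∀ k, k ≤ n → J0 (P0 k * L)
        = if k = n then ζ * lc0 n / lc1 n else 0 := by
      intro k hk
      have hs := hstar (P1 n * P0 k)
      have hre : (X ^ 2 - 1) * derivative (P1 n * P0 k) + X * (P1 n * P0 k)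
          = P0 k * L + (X ^ 2 - 1) * (P1 n * derivative (P0 k)) := by
        rw [Polynomial.derivative_mul, hL]; ring
      have hre2 : (X ^ 2 - 1) * (P1 n * P0 k) = (X ^ 2 - 1) * (P1 n * P0 k) := rfl
      rw [hre, hadd0] at hs
      have e1 : J0 ((X ^ 2 - 1) * (P1 n * derivative (P0 k))) = 0 := by
        rw [← hbridge]
        rw [A1 n _ ?_]
        · have : (derivative (P0 k)).coeff n = 0 := by
            rw [Polynomial.coeff_derivative,
              Polynomial.coeff_eq_zero_of_natDegree_lt (by rw [hdeg0]; omega), zero_mul]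
          rw [this, zero_div]
        · have := Polynomial.natDegree_derivative_le (P0 k)
          rw [hdeg0] at this
          omega
      have e2 : J0 ((X ^ 2 - 1) * (P1 n * P0 k)) = (if k = n then lc0 n else 0) / lc1 n := by
        rw [← hbridge]
        rw [A1 n _ (by rw [hdeg0]; omega)]
        by_cases hkn : k = n
        · rw [hkn, hc0, if_pos rfl]
        · rw [Polynomial.coeff_eq_zero_of_natDegree_lt (by rw [hdeg0]; omega), if_neg hkn]
      rw [e1, add_zero, e2] at hs
      rw [hs]
      by_cases hkn : k = n
      · rw [if_pos hkn, if_pos hkn, mul_div_assoc]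
      · rw [if_neg hkn, if_neg hkn, zero_div, mul_zero]
    rw [hrepr, Finset.sum_range_succ, Finset.sum_range_succ]
    have hzero : ∑ k ∈ Finset.range n, Polynomial.C (J0 (P0 k * L)) * P0 k = 0 := by
      refine Finset.sum_eq_zero (fun k hk => ?_)
      rw [hlow k (le_of_lt (Finset.mem_range.1 hk)),
        if_neg (Nat.ne_of_lt (Finset.mem_range.1 hk))]
      simp
    rw [hzero, zero_add, htop, hlow n le_rfl, if_pos rfl]
    have hcpt : ((n : ℝ) + 1) * pt n = ((n : ℝ) + 1) * lc1 n / lc0 (n + 1) := by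
      rw [hpt, mul_div_assoc]
    have hcp : ζ * p n = ζ * lc0 n / lc1 n := by
      rw [hp, mul_div_assoc]
    rw [hcpt, hcp]
    ring
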